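/- Let p ≥ q ≥ 2 be integers with p ≥ q² and n > 2p, and let L be the equation px + qy = z. Then the number of maximal L-free subsets of [n] is at least 2^ℓ where ℓ = (n(q−1) − pq + q − 2q²)/q². -/

import Mathlib

private def LFree (p q : ℕ) (S : Finset ℕ) : Prop :=
  ¬ ∃ x ∈ S, ∃ y ∈ S, ∃ z ∈ S, p * x + q * y = z

private lemma lfree_max_ext (p q n : ℕ) (S : Finset ℕ) (hS : S ⊆ Finset.Icc 1 n)
    (hf : LFree p q S) :
    ∃ M, S ⊆ M ∧ M ⊆ Finset.Icc 1 n ∧ LFree p q M ∧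
      ∀ T' : Finset ℕ, T' ⊆ Finset.Icc 1 n → LFree p q T' → M ⊆ T' → T' = M := by
  classical
  set C : Finset (Finset ℕ) :=
    (Finset.Icc 1 n).powerset.filter (fun M => S ⊆ M ∧ LFree p q M) with hC
  have hSC : S ∈ C := by
    simp [hC, Finset.mem_filter, Finset.mem_powerset, hS, hf]
  obtain ⟨M, hMC, hMmax⟩ := C.exists_max_image (fun M => M.card) ⟨S, hSC⟩
  rw [hC, Finset.mem_filter, Finset.mem_powerset] at hMC
  obtain ⟨hMIcc, hSM, hMfree⟩ := hMC
  refine ⟨M, hSM, hMIcc, hMfree, ?_⟩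
  intro T' hT'Icc hT'free hMT'
  have hT'C : T' ∈ C := by
    rw [hC, Finset.mem_filter, Finset.mem_powerset]
    exact ⟨hT'Icc, hSM.trans hMT', hT'free⟩
  exact (Finset.eq_of_subset_of_card_le hMT' (hMmax T' hT'C)).symm

theorem stmt15 (p q n : ℕ) (hq : 2 ≤ q) (hpq : q ≤ p) (hp : q ^ 2 ≤ p)
    (hn : 2 * p < n) :
    (2 : ℝ) ^ (((n : ℝ) * ((q : ℝ) - 1) - (p : ℝ) * q + q - 2 * (q : ℝ) ^ 2) /
        (q : ℝ) ^ 2) ≤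
      ({T : Finset ℕ | T ⊆ Finset.Icc 1 n ∧
          (¬ ∃ x ∈ T, ∃ y ∈ T, ∃ z ∈ T, p * x + q * y = z) ∧
          ∀ T' : Finset ℕ, T' ⊆ Finset.Icc 1 n →
            (¬ ∃ x ∈ T', ∃ y ∈ T', ∃ z ∈ T', p * x + q * y = z) →
            T ⊆ T' → T' = T}.ncard : ℝ) := by
  classical
  set 𝒮 : Set (Finset ℕ) := {T : Finset ℕ | T ⊆ Finset.Icc 1 n ∧ LFree p q T ∧
      ∀ T' : Finset ℕ, T' ⊆ Finset.Icc 1 n → LFree p q T' → T ⊆ T' → T' = T} with h𝒮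
  show _ ≤ (𝒮.ncard : ℝ)
  have hq0 : 0 < q := by omega
  have hq2 : 4 ≤ q ^ 2 := by nlinarith
  have hp4 : 4 ≤ p := le_trans hq2 hp
  have hpn : p < n := by omega
  set A0 : ℕ := n / q ^ 2 with hA0def
  set B0 : ℕ := (n - p) / q with hB0def
  set Y : Finset ℕ := (Finset.Ioc A0 B0).erase (p + q) with hYdef
  -- basic facts about elements of Y
  have hA0ge : 2 ≤ A0 := by
    rw [hA0def, Nat.le_div_iff_mul_le (by omega)]
    omega
  have hyfacts : ∀ y ∈ Y, n < q ^ 2 * y ∧ p + q * y ≤ n ∧ y ≠ p + q ∧ 3 ≤ y ∧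
      n < p * y ∧ n < q * (p + q * y) ∧ B0 < p + q * y := by
    intro y hy
    rw [hYdef, Finset.mem_erase, Finset.mem_Ioc] at hy
    obtain ⟨hne, hy1, hy2⟩ := hy
    have f1 : n < q ^ 2 * y := by
      have h := (Nat.div_lt_iff_lt_mul (show 0 < q ^ 2 by omega)).mp hy1
      rw [mul_comm] at h
      exact h
    have f2 : q * y ≤ n - p := by
      have h := (Nat.le_div_iff_mul_le (show 0 < q by omega)).mp hy2
      rw [mul_comm] at h
      exact h
    have f2' : p + q * y ≤ n := by omega
    have f3 : n < p * y := lt_of_lt_of_le f1 (Nat.mul_le_mul_right y hp)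
    have f4 : n < q * (p + q * y) := by
      have : q ^ 2 * y ≤ q * (p + q * y) := by ring_nf; nlinarith
      omega
    have f5 : B0 < p + q * y := by
      have hB : q * B0 ≤ n - p := by
        rw [mul_comm]; exact Nat.div_mul_le_self _ _
      by_contra hcon
      push_neg at hcon
      have : q * (p + q * y) ≤ q * B0 := Nat.mul_le_mul_left q hcon
      omega
    exact ⟨f1, f2', hne, by omega, f3, f4, f5⟩
  -- the base set attached to a choice T ⊆ Y
  set ST : Finset ℕ → Finset ℕ :=
    fun T => insert 1 ((T.image fun y => p + q * y) ∪ (Y \ T)) with hSTdef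
  have hmemST : ∀ T s, s ∈ ST T ↔ s = 1 ∨ (∃ w ∈ T, p + q * w = s) ∨ s ∈ Y \ T := by
    intro T s
    simp [hSTdef, Finset.mem_insert, Finset.mem_union, Finset.mem_image, or_assoc]
  have hSTsub : ∀ T : Finset ℕ, T ⊆ Y → ST T ⊆ Finset.Icc 1 n := by
    intro T hT s hs
    rw [hmemST] at hs
    rw [Finset.mem_Icc]
    rcases hs with rfl | ⟨w, hw, rfl⟩ | hs
    · omega
    · obtain ⟨-, h2, -⟩ := hyfacts w (hT hw)
      omega
    · obtain ⟨-, h2, -, h4, -⟩ := hyfacts s (Finset.mem_sdiff.mp hs).1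
      have hle : s ≤ q * s := Nat.le_mul_of_pos_left s hq0
      omega
  have hSTfree : ∀ T : Finset ℕ, T ⊆ Y → LFree p q (ST T) := by
    intro T hT
    rintro ⟨x, hx, y, hy, z, hz, heq⟩
    have hzn : z ≤ n := (Finset.mem_Icc.mp (hSTsub T hT hz)).2
    rw [hmemST] at hx hy hz
    -- x must be 1
    rcases hx with rfl | ⟨w, hw, rfl⟩ | hx
    · -- x = 1
      rcases hy with rfl | ⟨v, hv, rfl⟩ | hy
      · -- y = 1 : z = p + q
        have hz' : z = p + q := by omega
        subst hz'
        rcases hz with h1 | ⟨w, hw, hwz⟩ | hz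
        · omega
        · have h3 := (hyfacts w (hT hw)).2.2.2.1
          have : q * 3 ≤ q * w := Nat.mul_le_mul_left q h3
          omega
        · exact (hyfacts _ (Finset.mem_sdiff.mp hz).1).2.2.1 rfl
      · -- y = p + q * v, big
        have := (hyfacts v (hT hv)).2.2.2.2.2.1
        omega
      · -- y ∈ Y \ T : z = p + q * y
        have hyY := (Finset.mem_sdiff.mp hy).1
        have hynT := (Finset.mem_sdiff.mp hy).2
        have hz' : z = p + q * y := by omega
        subst hz'
        rcases hz with h1 | ⟨w, hw, hwz⟩ | hz
        · omega
        · have hqq : q * w = q * y := by omega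
          have : w = y := Nat.eq_of_mul_eq_mul_left hq0 hqq
          subst this
          exact hynT hw
        · have hzY := (Finset.mem_sdiff.mp hz).1
          have h5 := (hyfacts y hyY).2.2.2.2.2.2
          rw [hYdef, Finset.mem_erase, Finset.mem_Ioc] at hzY
          omega
    · -- x = p + q * w : p * x > n
      have h1 := (hyfacts w (hT hw)).2.2.2.2.2.1
      have h2 : q * (p + q * w) ≤ p * (p + q * w) := Nat.mul_le_mul_right _ (by omega)
      nlinarith [(hyfacts w (hT hw)).1]
    · -- x ∈ Y \ T : p * x > n
      have := (hyfacts x (Finset.mem_sdiff.mp hx).1).2.2.2.2.1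
      omega
  -- choose maximal extensions
  have hex : ∀ T : Finset ℕ, ∃ M : Finset ℕ, T ⊆ Y → (ST T ⊆ M ∧ M ∈ 𝒮) := by
    intro T
    by_cases hT : T ⊆ Y
    · obtain ⟨M, h1, h2, h3, h4⟩ := lfree_max_ext p q n (ST T) (hSTsub T hT) (hSTfree T hT)
      exact ⟨M, fun _ => ⟨h1, h2, h3, h4⟩⟩
    · exact ⟨∅, fun h => absurd h hT⟩
  choose f hf using hex
  -- injectivity
  have hkey : ∀ T₁ T₂ : Finset ℕ, T₁ ⊆ Y → T₂ ⊆ Y → f T₁ = f T₂ →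
      ∀ y ∈ T₁, y ∉ T₂ → False := by
    intro T₁ T₂ h1 h2 hff y hyT1 hyT2
    obtain ⟨hs1, hm1⟩ := hf T₁ h1
    obtain ⟨hs2, hm2⟩ := hf T₂ h2
    have hMfree : LFree p q (f T₁) := hm1.2.1
    apply hMfree
    refine ⟨1, ?_, y, ?_, p + q * y, ?_, by ring⟩
    · exact hs1 ((hmemST T₁ 1).mpr (Or.inl rfl))
    · rw [hff]
      exact hs2 ((hmemST T₂ y).mpr (Or.inr (Or.inr (Finset.mem_sdiff.mpr ⟨h1 hyT1, hyT2⟩))))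
    · exact hs1 ((hmemST T₁ _).mpr (Or.inr (Or.inl ⟨y, hyT1, rfl⟩)))
  have hinj : Set.InjOn f ↑Y.powerset := by
    intro T₁ hT₁ T₂ hT₂ hff
    have hT₁' : T₁ ⊆ Y := by simpa using hT₁
    have hT₂' : T₂ ⊆ Y := by simpa using hT₂
    by_contra hne
    have : ∃ y, (y ∈ T₁ ∧ y ∉ T₂) ∨ (y ∈ T₂ ∧ y ∉ T₁) := by
      by_contra hc
      push_neg at hc
      exact hne (Finset.ext fun a => ⟨(hc a).1, (hc a).2⟩)
    obtain ⟨y, ⟨ha, hb⟩ | ⟨ha, hb⟩⟩ := this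
    · exact hkey T₁ T₂ hT₁' hT₂' hff y ha hb
    · exact hkey T₂ T₁ hT₂' hT₁' hff.symm y ha hb
  -- finiteness and counting
  have hfin : 𝒮.Finite := by
    apply Set.Finite.subset (Finset.finite_toSet (Finset.Icc 1 n).powerset)
    intro T hT
    rw [Finset.mem_coe, Finset.mem_powerset]
    exact hT.1
  have hcount : 2 ^ Y.card ≤ 𝒮.ncard := by
    rw [Set.ncard_eq_toFinset_card 𝒮 hfin]
    rw [← Finset.card_powerset Y]
    apply Finset.card_le_card_of_injOn f
    · intro T hT
      rw [Finset.mem_coe, Finset.mem_powerset] at hT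
      rw [Finset.mem_coe, Set.Finite.mem_toFinset]
      exact (hf T hT).2
    · exact hinj
  -- arithmetic: exponent bound
  have hB0real : ((n : ℝ) - p - q + 1) / q ≤ (B0 : ℝ) := by
    have hd : q * B0 + (n - p) % q = n - p := Nat.div_add_mod (n - p) q
    have hm : (n - p) % q < q := Nat.mod_lt _ hq0
    have hnat : n < q * B0 + q + p := by omega
    have hc : (n : ℝ) + 1 ≤ q * B0 + q + p := by exact_mod_cast hnat
    rw [div_le_iff₀ (by positivity)]
    nlinarith [hc]
  have hA0real : (A0 : ℝ) ≤ (n : ℝ) / (q : ℝ) ^ 2 := by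
    have hnat : A0 * q ^ 2 ≤ n := Nat.div_mul_le_self n (q ^ 2)
    have hc : (A0 : ℝ) * (q : ℝ) ^ 2 ≤ n := by exact_mod_cast hnat
    rw [le_div_iff₀ (by positivity)]
    exact hc
  have hcardY : (B0 : ℝ) - A0 - 1 ≤ (Y.card : ℝ) := by
    have h1 : (Finset.Ioc A0 B0).card = B0 - A0 := Nat.card_Ioc A0 B0
    have h2 : (Finset.Ioc A0 B0).card - 1 ≤ Y.card := by
      rw [hYdef]; exact Finset.pred_card_le_card_erase
    have h3 : B0 ≤ Y.card + 1 + A0 := by omega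
    have hc : (B0 : ℝ) ≤ (Y.card : ℝ) + 1 + A0 := by exact_mod_cast h3
    linarith
  have hexp : ((n : ℝ) * ((q : ℝ) - 1) - (p : ℝ) * q + q - 2 * (q : ℝ) ^ 2) /
      (q : ℝ) ^ 2 ≤ (Y.card : ℝ) := by
    have hqR : (2 : ℝ) ≤ (q : ℝ) := by exact_mod_cast hq
    have key : ((n : ℝ) * ((q : ℝ) - 1) - (p : ℝ) * q + q - 2 * (q : ℝ) ^ 2) /
        (q : ℝ) ^ 2 = ((n : ℝ) - p - q + 1) / q - (n : ℝ) / (q : ℝ) ^ 2 - 1 := by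
      field_simp
      ring
    rw [key]
    linarith [hB0real, hA0real, hcardY]
  calc (2 : ℝ) ^ (((n : ℝ) * ((q : ℝ) - 1) - (p : ℝ) * q + q - 2 * (q : ℝ) ^ 2) /
        (q : ℝ) ^ 2)
      ≤ (2 : ℝ) ^ ((Y.card : ℕ) : ℝ) := Real.rpow_le_rpow_of_exponent_le one_le_two hexp
    _ = ((2 ^ Y.card : ℕ) : ℝ) := by
        rw [Real.rpow_natCast]; push_cast; ring
    _ ≤ (𝒮.ncard : ℝ) := by exact_mod_cast hcount
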